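/- Let $p(z) = \sum_{s=0}^m c_s z^s$ be a complex polynomial and $\beta > 1$ a real number such that $p(z) \ne 0$ whenever $|z| < \beta$. Let $f$ be a branch of $\ln p$ on the disc $|z| < \beta$ and let $T_k(z) = f(0) + \sum_{s=1}^k \frac{f^{(s)}(0)}{s!} z^s$ be its degree-$k$ Taylor polynomial at $0$. Then $|f(1) - T_k(1)| \le \frac{m}{(k+1)\beta^k(\beta - 1)}$. -/

import Mathlib

open Polynomial Complex Filter

lemma multiset_hasSum {α : Type*} (M : Multiset α) (t : α → ℕ → ℂ) (g : α → ℂ)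
    (h : ∀ r ∈ M, HasSum (t r) (g r)) :
    HasSum (fun n => (M.map (fun r => t r n)).sum) ((M.map g).sum) := by
  induction M using Multiset.induction with
  | empty => simpa using hasSum_zero
  | cons a s ih =>
    simp only [Multiset.map_cons, Multiset.sum_cons]
    exact (h a (Multiset.mem_cons_self a s)).add
      (ih fun r hr => h r (Multiset.mem_cons_of_mem hr))

lemma multiset_diffOn {α : Type*} (M : Multiset α) (g : α → ℂ → ℂ) (s : Set ℂ)
    (h : ∀ r ∈ M, DifferentiableOn ℂ (g r) s) :
    DifferentiableOn ℂ (fun z => (M.map (fun r => g r z)).sum) s := by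
  induction M using Multiset.induction with
  | empty => simp
  | cons a s' ih =>
    simp only [Multiset.map_cons, Multiset.sum_cons]
    exact (h a (Multiset.mem_cons_self a s')).add
      (ih fun r hr => h r (Multiset.mem_cons_of_mem hr))

lemma multiset_sum_swap {α : Type*} (M : Multiset α) (S : Finset ℕ) (t : α → ℕ → ℂ) :
    ∑ s ∈ S, (M.map (fun r => t r s)).sum = (M.map (fun r => ∑ s ∈ S, t r s)).sum := by
  induction M using Multiset.induction with
  | empty => simp
  | cons a s' ih => simp [Finset.sum_add_distrib, ih]

lemma multiset_sum_map_sub {α : Type*} (M : Multiset α) (a b : α → ℂ) :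
    (M.map (fun r => a r - b r)).sum = (M.map a).sum - (M.map b).sum := by
  induction M using Multiset.induction with
  | empty => simp
  | cons x s' ih => simp only [Multiset.map_cons, Multiset.sum_cons, ih]; ring

/-- If the polynomial `p` of degree at most `m` has no zeros in
the disc `|z| < β` (`β > 1`) and `f` is a branch of `log p` there, then the
degree-`k` Taylor polynomial `T_k` of `f` at `0` satisfies
`|f(1) - T_k(1)| ≤ m / ((k+1) β^k (β-1))`. -/
theorem stmt_10 (m k : ℕ) (p : Polynomial ℂ) (hdeg : p.natDegree ≤ m)
    (β : ℝ) (hβ : 1 < β)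
    (hp : ∀ z : ℂ, ‖z‖ < β → p.eval z ≠ 0)
    (f : ℂ → ℂ)
    (hf : DifferentiableOn ℂ f (Metric.ball (0 : ℂ) β))
    (hfp : ∀ z ∈ Metric.ball (0 : ℂ) β, Complex.exp (f z) = p.eval z) :
    ‖f 1 - (f 0 + ∑ s ∈ Finset.Icc 1 k, iteratedDeriv s f 0 / (Nat.factorial s))‖
      ≤ m / ((k + 1) * β ^ k * (β - 1)) := by
  have hβ0 : (0:ℝ) < β := by linarith
  have hball : ∀ z : ℂ, ‖z‖ < β → z ∈ Metric.ball (0 : ℂ) β := by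
    intro z hz; simpa [Metric.mem_ball] using hz
  have h0mem : (0:ℂ) ∈ Metric.ball (0 : ℂ) β := hball 0 (by simpa using hβ0)
  have h1mem : (1:ℂ) ∈ Metric.ball (0 : ℂ) β := hball 1 (by simpa using hβ)
  have hp0 : p ≠ 0 := by
    intro h
    exact hp 0 (by simpa using hβ0) (by simp [h])
  set R := p.roots with hR
  have hcard : R.card ≤ m := le_trans (Polynomial.card_roots' p) hdeg
  have hroot : ∀ r ∈ R, β ≤ ‖r‖ := by
    intro r hr
    by_contra hlt
    exact hp r (lt_of_not_ge hlt) (Polynomial.isRoot_of_mem_roots hr)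
  have hrne : ∀ r ∈ R, r ≠ 0 := by
    intro r hr h0
    have := hroot r hr
    rw [h0] at this; simp at this; linarith
  have hfact : p = C p.leadingCoeff * (R.map fun a => X - C a).prod :=
    (IsAlgClosed.splits p).eq_prod_roots
  have heval : ∀ z : ℂ, p.eval z = p.leadingCoeff * (R.map fun r => z - r).prod := by
    intro z
    conv_lhs => rw [hfact]
    rw [eval_mul, eval_C, eval_multiset_prod, Multiset.map_map]
    simp [Function.comp]
  -- small norms
  have hsmall : ∀ z : ℂ, ‖z‖ < β → ∀ r ∈ R, ‖z / r‖ < 1 := by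
    intro z hz r hr
    rw [norm_div]
    have hrβ := hroot r hr
    rw [div_lt_one (by linarith)]
    linarith
  have hne1 : ∀ z : ℂ, ‖z‖ < β → ∀ r ∈ R, (1 : ℂ) - z / r ≠ 0 := by
    intro z hz r hr h0
    have h1 : (1:ℂ) = z / r := sub_eq_zero.mp h0
    have h2 := hsmall z hz r hr
    rw [← h1] at h2
    simp at h2
  set F : ℂ → ℂ := fun z => f 0 + (R.map fun r => Complex.log (1 - z / r)).sum with hF
  have hexpF : ∀ z : ℂ, ‖z‖ < β → Complex.exp (F z) = p.eval z := by
    intro z hz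
    rw [hF]
    simp only
    rw [Complex.exp_add, Complex.exp_multiset_sum, Multiset.map_map]
    have h1 : (R.map (Complex.exp ∘ fun r => Complex.log (1 - z / r)))
        = R.map (fun r => 1 - z / r) :=
      Multiset.map_congr rfl fun r hr => Complex.exp_log (hne1 z hz r hr)
    rw [h1, hfp 0 h0mem, heval 0, heval z, mul_assoc, ← Multiset.prod_map_mul]
    congr 1
    congr 1
    apply Multiset.map_congr rfl
    intro r hr
    have hr0 := hrne r hr
    field_simp
    ring
  have hFdiff : DifferentiableOn ℂ F (Metric.ball (0 : ℂ) β) := by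
    apply DifferentiableOn.add (differentiableOn_const _)
    apply multiset_diffOn R (fun r z => Complex.log (1 - z / r))
    intro r hr
    apply DifferentiableOn.clog
    · exact (differentiableOn_const 1).sub (differentiableOn_id.div_const r)
    · intro z hz
      have hzβ : ‖z‖ < β := by simpa [mem_ball_zero_iff] using hz
      have := Complex.mem_slitPlane_of_norm_lt_one (z := -(z/r))
        (by simpa using hsmall z hzβ r hr)
      simpa [sub_eq_add_neg] using this
  have hpe : ∀ z ∈ Metric.ball (0:ℂ) β, p.eval z ≠ 0 := fun z hz =>
    hp z (by simpa [mem_ball_zero_iff] using hz)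
  have heq : Set.EqOn f F (Metric.ball (0 : ℂ) β) := by
    set g := fun z => f z - F z with hg
    have hgdiff : DifferentiableOn ℂ g (Metric.ball (0:ℂ) β) := hf.sub hFdiff
    have hexp1 : ∀ z ∈ Metric.ball (0:ℂ) β, Complex.exp (g z) = 1 := by
      intro z hz
      rw [hg]
      simp only
      rw [Complex.exp_sub, hfp z hz, hexpF z (by simpa [mem_ball_zero_iff] using hz),
        div_self (hpe z hz)]
    have hd0 : ∀ z ∈ Metric.ball (0:ℂ) β, deriv g z = 0 := by
      intro z hz
      have hzd : DifferentiableAt ℂ g z :=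
        hgdiff.differentiableAt (Metric.isOpen_ball.mem_nhds hz)
      have h1 := hzd.hasDerivAt.cexp
      have h2 : (fun w => Complex.exp (g w)) =ᶠ[nhds z] (fun _ => 1) :=
        eventually_of_mem (Metric.isOpen_ball.mem_nhds hz) hexp1
      have h3 : deriv (fun w => Complex.exp (g w)) z = 0 := by
        rw [h2.deriv_eq]; simp
      have h4 := h1.deriv
      rw [h3, hexp1 z hz, one_mul] at h4
      exact h4.symm
    have hF0 : F 0 = f 0 := by
      rw [hF]
      simp only
      have h5 : (R.map fun r => Complex.log (1 - 0/r)) = R.map (fun _ => (0:ℂ)) :=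
        Multiset.map_congr rfl fun r hr => by simp
      rw [h5]
      simp
    intro z hz
    have hc : g z = g 0 := by
      apply (convex_ball (0:ℂ) β).is_const_of_fderivWithin_eq_zero hgdiff ?_ hz h0mem
      intro x hx
      rw [fderivWithin_of_isOpen Metric.isOpen_ball hx]
      apply ContinuousLinearMap.ext_ring
      rw [ContinuousLinearMap.zero_apply]
      have : fderiv ℂ g x 1 = deriv g x := rfl
      rw [this, hd0 x hx]
    rw [hg] at hc
    simp only at hc
    rw [hF0] at hc
    have : f z - F z = 0 := by rw [hc]; ring
    linear_combination this
  -- the Taylor coefficients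
  set d : ℂ → ℕ → ℂ := fun r n => -(r⁻¹)^n / (n : ℂ) with hddef
  set c : ℕ → ℂ := fun n => (if n = 0 then f 0 else 0) + (R.map fun r => d r n).sum
    with hcdef
  have hc0 : c 0 = f 0 := by
    rw [hcdef]
    simp [hddef]
  have hlogsum : ∀ (y r : ℂ), ‖y / r‖ < 1 →
      HasSum (fun n : ℕ => d r n * y^n) (Complex.log (1 - y/r)) := by
    intro y r hyr
    have h1 := (Complex.hasSum_taylorSeries_neg_log hyr).neg
    rw [neg_neg] at h1
    have hfun : (fun n : ℕ => d r n * y^n) = fun n : ℕ => -((y/r)^n / n) := by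
      funext n
      rw [hddef]
      simp only
      rw [div_pow, inv_pow]
      ring
    rw [hfun]
    exact h1
  have hβinv1 : β⁻¹ < 1 := inv_lt_one_of_one_lt₀ hβ
  have hβinv0 : (0:ℝ) ≤ β⁻¹ := by positivity
  have hgeom : Summable (fun n : ℕ => β⁻¹ ^ n) := summable_geometric_of_lt_one hβinv0 hβinv1
  have hcbound : ∀ n : ℕ, ‖c n‖ ≤ (‖f 0‖ + m) * β⁻¹ ^ n := by
    intro n
    rcases Nat.eq_zero_or_pos n with rfl | hn
    · rw [hc0]
      simp only [pow_zero, mul_one]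
      have : (0:ℝ) ≤ m := Nat.cast_nonneg m
      linarith
    · rw [hcdef]
      simp only [if_neg hn.ne', zero_add]
      have hdb : ∀ r ∈ R, ‖d r n‖ ≤ β⁻¹ ^ n := by
        intro r hr
        rw [hddef]
        simp only
        rw [norm_div, norm_neg, norm_pow, norm_inv]
        have h1 : ‖r‖⁻¹ ≤ β⁻¹ := inv_anti₀ hβ0 (hroot r hr)
        have h2 : (1:ℝ) ≤ ‖((n:ℕ):ℂ)‖ := by
          rw [Complex.norm_natCast]
          exact_mod_cast hn
        calc ‖r‖⁻¹ ^ n / ‖((n:ℕ):ℂ)‖ ≤ ‖r‖⁻¹ ^ n / 1 := by gcongr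
          _ = ‖r‖⁻¹ ^ n := div_one _
          _ ≤ β⁻¹ ^ n := by gcongr
      calc ‖(R.map fun r => d r n).sum‖
          ≤ ((R.map fun r => d r n).map norm).sum := norm_multiset_sum_le _
        _ = (R.map fun r => ‖d r n‖).sum := by rw [Multiset.map_map]; rfl
        _ ≤ (R.map fun _ => β⁻¹ ^ n).sum := Multiset.sum_map_le_sum_map _ _ hdb
        _ = (Multiset.card R) • (β⁻¹ ^ n) := by rw [Multiset.map_const', Multiset.sum_replicate]
        _ ≤ (‖f 0‖ + m) * β⁻¹ ^ n := by
            rw [nsmul_eq_mul]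
            have h3 : (Multiset.card R : ℝ) ≤ ‖f 0‖ + m := by
              have : (Multiset.card R : ℝ) ≤ (m:ℝ) := by exact_mod_cast hcard
              have := norm_nonneg (f 0)
              linarith
            apply mul_le_mul_of_nonneg_right h3 (by positivity)
  have hsummable_c : Summable (fun n => ‖(FormalMultilinearSeries.ofScalars ℂ c) n‖ * (1:ℝ)^n) := by
    simp only [FormalMultilinearSeries.ofScalars_norm, one_pow, mul_one]
    apply Summable.of_nonneg_of_le (fun n => norm_nonneg _) hcbound
    exact hgeom.mul_left _
  have hseries : HasFPowerSeriesOnBall F (FormalMultilinearSeries.ofScalars ℂ c) 0 1 := by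
    refine ⟨?_, one_pos, ?_⟩
    · have := FormalMultilinearSeries.le_radius_of_summable_norm _ (r := 1) hsummable_c
      simpa using this
    · intro y hy
      have hy1 : ‖y‖ < 1 := by
        rw [EMetric.mem_ball, edist_zero_right, enorm_eq_nnnorm] at hy
        exact_mod_cast hy
      have hyβ : ‖y‖ < β := lt_trans hy1 hβ
      have hmult := multiset_hasSum R (fun r n => d r n * y^n)
        (fun r => Complex.log (1 - y/r))
        (fun r hr => hlogsum y r (hsmall y hyβ r hr))
      have hsingle : HasSum (fun n : ℕ => (if n = 0 then f 0 else 0) * y^n) (f 0) := by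
        have h4 := hasSum_single (f := fun n : ℕ => (if n = 0 then f 0 else 0) * y^n) 0
          (fun b hb => by simp [hb])
        simpa using h4
      have hadd := hsingle.add hmult
      rw [zero_add]
      have hfun2 : (fun n : ℕ => (FormalMultilinearSeries.ofScalars ℂ c) n (fun _ => y))
          = fun n : ℕ => (if n = 0 then f 0 else 0) * y^n
              + (R.map fun r => d r n * y^n).sum := by
        funext n
        rw [FormalMultilinearSeries.ofScalars_apply_eq, smul_eq_mul, hcdef]
        simp only
        rw [add_mul, Multiset.sum_map_mul_right]
      rw [hfun2, hF]
      exact hadd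
  have hiter : ∀ s : ℕ, iteratedDeriv s f 0 = (Nat.factorial s : ℂ) * c s := by
    intro s
    have h1 : f =ᶠ[nhds (0:ℂ)] F :=
      eventually_of_mem (Metric.isOpen_ball.mem_nhds h0mem) heq
    rw [h1.iteratedDeriv_eq, iteratedDeriv_eq_iteratedFDeriv,
      ← hseries.factorial_smul (1:ℂ) s, FormalMultilinearSeries.ofScalars_apply_eq]
    simp [smul_eq_mul]
  set B : ℝ := 1 / (((k:ℝ) + 1) * β ^ k * (β - 1)) with hBdef
  have hsum_eq : ∑ s ∈ Finset.Icc 1 k, iteratedDeriv s f 0 / (Nat.factorial s)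
      = ∑ s ∈ Finset.Icc 1 k, (R.map fun r => d r s).sum := by
    apply Finset.sum_congr rfl
    intro s hs
    have hs0 : s ≠ 0 := by
      rw [Finset.mem_Icc] at hs
      omega
    rw [hiter s, mul_comm, mul_div_assoc, div_self, mul_one]
    · rw [hcdef]
      simp [hs0]
    · exact_mod_cast Nat.factorial_ne_zero s
  have hmain : f 1 - (f 0 + ∑ s ∈ Finset.Icc 1 k, iteratedDeriv s f 0 / (Nat.factorial s))
      = (R.map fun r => Complex.log (1 - 1/r) - ∑ s ∈ Finset.Icc 1 k, d r s).sum := by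
    rw [heq h1mem, hsum_eq, multiset_sum_swap, multiset_sum_map_sub, hF]
    simp only
    ring
  have htail : ∀ r ∈ R, ‖Complex.log (1 - 1/r) - ∑ s ∈ Finset.Icc 1 k, d r s‖ ≤ B := by
    intro r hr
    have h1r : ‖(1:ℂ)/r‖ < 1 := hsmall 1 (by simpa using hβ) r hr
    have hs := hlogsum 1 r h1r
    simp only [one_pow, mul_one] at hs
    have hd0 : d r 0 = 0 := by
      rw [hddef]
      simp
    have hIcc : ∑ s ∈ Finset.Icc 1 k, d r s = ∑ s ∈ Finset.range (k+1), d r s := by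
      rw [← Finset.Ico_add_one_right_eq_Icc, Finset.sum_Ico_eq_sum_range, Finset.sum_range_succ', hd0,
        add_zero, Nat.add_sub_cancel]
      exact Finset.sum_congr rfl fun i _ => by rw [add_comm]
    have h2 := Summable.sum_add_tsum_nat_add (f := fun n => d r n) (k+1) hs.summable
    rw [hs.tsum_eq] at h2
    have h3 : Complex.log (1 - 1/r) - ∑ s ∈ Finset.range (k+1), d r s
        = ∑' i : ℕ, d r (i + (k+1)) := by
      rw [← h2]
      ring
    rw [hIcc, h3]
    have hrβ : ‖r‖⁻¹ ≤ β⁻¹ := inv_anti₀ hβ0 (hroot r hr)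
    have hterm : ∀ i : ℕ, ‖d r (i + (k+1))‖ ≤ β⁻¹ ^ (i + (k+1)) / ((k:ℝ)+1) := by
      intro i
      rw [hddef]
      simp only
      rw [norm_div, norm_neg, norm_pow, norm_inv, Complex.norm_natCast]
      have h4 : ((k:ℝ)+1) ≤ ((i + (k+1) : ℕ) : ℝ) := by
        push_cast
        linarith [Nat.cast_nonneg (α := ℝ) i]
      gcongr
    have hgeomfun : (fun i : ℕ => β⁻¹ ^ (i + (k+1)) / ((k:ℝ)+1))
        = fun i => β⁻¹ ^ i * (β⁻¹^(k+1) / ((k:ℝ)+1)) := by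
      funext i
      rw [pow_add]
      ring
    have hgeom2 : Summable (fun i : ℕ => β⁻¹ ^ (i + (k+1)) / ((k:ℝ)+1)) := by
      rw [hgeomfun]
      exact hgeom.mul_right _
    have hsn : Summable (fun i : ℕ => ‖d r (i + (k+1))‖) :=
      Summable.of_nonneg_of_le (fun _ => norm_nonneg _) hterm hgeom2
    calc ‖∑' i : ℕ, d r (i + (k+1))‖ ≤ ∑' i : ℕ, ‖d r (i + (k+1))‖ := norm_tsum_le_tsum_norm hsn
      _ ≤ ∑' i : ℕ, β⁻¹ ^ (i + (k+1)) / ((k:ℝ)+1) := Summable.tsum_le_tsum hterm hsn hgeom2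
      _ = B := by
          rw [hgeomfun, tsum_mul_right, tsum_geometric_of_lt_one hβinv0 hβinv1, hBdef]
          have hβne : β ≠ 0 := ne_of_gt hβ0
          have hβ1ne : β - 1 ≠ 0 := ne_of_gt (by linarith)
          have hβi1 : 1 - β⁻¹ ≠ 0 := by
            have : β⁻¹ < 1 := hβinv1
            intro h
            rw [sub_eq_zero] at h
            exact absurd h.symm (ne_of_lt this)
          have hk1 : ((k:ℝ)+1) ≠ 0 := by positivity
          field_simp
          ring_nf
          rw [show β * β ^ k * β⁻¹ * β⁻¹ ^ k = (β * β⁻¹) * (β * β⁻¹) ^ k by ring,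
            mul_inv_cancel₀ hβne, one_pow, mul_one]
  rw [hmain]
  have hB0 : 0 ≤ B := by
    rw [hBdef]
    have hβ1 : (0:ℝ) < β - 1 := by linarith
    positivity
  calc ‖(R.map fun r => Complex.log (1 - 1/r) - ∑ s ∈ Finset.Icc 1 k, d r s).sum‖
      ≤ ((R.map fun r => Complex.log (1 - 1/r) - ∑ s ∈ Finset.Icc 1 k, d r s).map norm).sum :=
        norm_multiset_sum_le _
    _ = (R.map fun r => ‖Complex.log (1 - 1/r) - ∑ s ∈ Finset.Icc 1 k, d r s‖).sum := by
        rw [Multiset.map_map]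
        rfl
    _ ≤ (R.map fun _ => B).sum := Multiset.sum_map_le_sum_map _ _ htail
    _ = (Multiset.card R) • B := by rw [Multiset.map_const', Multiset.sum_replicate]
    _ ≤ (m:ℝ) / (((k:ℝ) + 1) * β ^ k * (β - 1)) := by
        rw [nsmul_eq_mul, hBdef, div_eq_mul_one_div ((m:ℝ))]
        have hβ1 : (0:ℝ) < β - 1 := by linarith
        apply mul_le_mul_of_nonneg_right _ (by positivity)
        exact_mod_cast hcard
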